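/- For n ≥ 2 and a positive integer p, consider the simplex S with vertices V₀ = 0, Vᵢ = eᵢ for i = 1,…,n−1, and Vₙ = (p−1)(e₁+⋯+e_{n−1}) + p·eₙ in ℤⁿ. If S is lattice-regular, then p divides n+1. -/
import Mathlib


/-- The vertices of the simplex `{3^{n-1}}^L_p`:
`V 0 = 0`, `V k = e_k` for `1 ≤ k ≤ n-1`, and
`V n = (p-1)(e₁ + ⋯ + e_{n-1}) + p·e_n`
(the standard basis of `ℤⁿ` being indexed by `Fin n`). -/
def simplexVert (n p : ℕ) : Fin (n + 1) → Fin n → ℤ :=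
  fun k j =>
    if (k : ℕ) = 0 then 0
    else if (k : ℕ) = n then (if (j : ℕ) = n - 1 then (p : ℤ) else (p : ℤ) - 1)
    else if (j : ℕ) = (k : ℕ) - 1 then 1 else 0

/-- The simplex with vertices `simplexVert n p` is lattice-regular: every
permutation of its vertices is realized by a lattice-affine transformation.
(For a simplex this is equivalent to transitivity on face-flags.) -/
def SimplexLatticeRegular (n p : ℕ) : Prop :=
  ∀ σ : Equiv.Perm (Fin (n + 1)),
    ∃ (A : Matrix (Fin n) (Fin n) ℤ) (b : Fin n → ℤ),
      (A.det = 1 ∨ A.det = -1) ∧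
      ∀ k, A.mulVec (simplexVert n p k) + b = simplexVert n p (σ k)

/-- If the simplex with vertices `0, e₁, …, e_{n-1},
(p-1)(e₁+⋯+e_{n-1}) + p·e_n` is lattice-regular, then `p` divides `n + 1`. -/
theorem simplex_regular_imp_dvd (n p : ℕ) (hn : 2 ≤ n) (hp : 1 ≤ p)
    (hreg : SimplexLatticeRegular n p) : p ∣ n + 1 := by
  have h0n : 0 < n := by omega
  have hl : n - 1 < n := by omega
  have h0lt : 0 < n + 1 := by omega
  have h1lt : 1 < n + 1 := by omega
  have hnlt : n < n + 1 := lt_add_one n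
  obtain ⟨A, b, -, h⟩ := hreg (Equiv.swap ⟨0, h0lt⟩ ⟨1, h1lt⟩)
  -- coordinate-0 equations
  have hcoord : ∀ k : Fin (n+1),
      (∑ j, A ⟨0, h0n⟩ j * simplexVert n p k j) + b ⟨0, h0n⟩
        = simplexVert n p (Equiv.swap ⟨0, h0lt⟩ ⟨1, h1lt⟩ k) ⟨0, h0n⟩ := by
    intro k
    have := congrFun (h k) ⟨0, h0n⟩
    simpa [Matrix.mulVec, dotProduct] using this
  -- vertex evaluations
  have V0 : ∀ j, simplexVert n p ⟨0, h0lt⟩ j = 0 := by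
    intro j; simp [simplexVert]
  have Vmid : ∀ (k : Fin (n+1)) (j : Fin n), 1 ≤ (k:ℕ) → (k:ℕ) ≤ n - 1 →
      simplexVert n p k j = if (j:ℕ) = (k:ℕ) - 1 then 1 else 0 := by
    intro k j h1 h2
    simp only [simplexVert]
    rw [if_neg (by omega), if_neg (by omega)]
  have Vn : ∀ j : Fin n, simplexVert n p ⟨n, hnlt⟩ j
      = if (j:ℕ) = n - 1 then (p:ℤ) else (p:ℤ) - 1 := by
    intro j
    simp only [simplexVert]
    rw [if_neg (by omega)]
    simp
  -- b at coordinate 0 equals 1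
  have hb : b ⟨0, h0n⟩ = 1 := by
    have hc := hcoord ⟨0, h0lt⟩
    rw [Equiv.swap_apply_left] at hc
    rw [Vmid ⟨1, h1lt⟩ ⟨0, h0n⟩ (by simp) (by simp; omega)] at hc
    simp only [V0, mul_zero, Finset.sum_const_zero, zero_add] at hc
    rw [hc, if_pos (by simp)]
  -- row-0 entries away from the last column are -1
  have ha : ∀ j : Fin n, (j:ℕ) ≠ n - 1 → A ⟨0, h0n⟩ j = -1 := by
    intro j hj
    have hk : (j:ℕ) + 1 < n + 1 := by omega
    have hjle : (j:ℕ) + 1 ≤ n - 1 := by omega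
    have hVk : ∀ j' : Fin n, simplexVert n p (⟨(j:ℕ)+1, hk⟩ : Fin (n+1)) j'
        = if j' = j then 1 else 0 := by
      intro j'
      rw [Vmid _ _ (by simp) (by simpa using hjle)]
      simp [Fin.ext_iff]
    have hrhs : simplexVert n p
        (Equiv.swap ⟨0, h0lt⟩ ⟨1, h1lt⟩ ⟨(j:ℕ)+1, hk⟩) ⟨0, h0n⟩ = 0 := by
      rcases Nat.eq_zero_or_pos (j:ℕ) with h0 | h0
      · have he : (⟨(j:ℕ)+1, hk⟩ : Fin (n+1)) = ⟨1, h1lt⟩ := by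
          simp [Fin.ext_iff, h0]
        rw [he, Equiv.swap_apply_right]
        exact V0 _
      · rw [Equiv.swap_apply_of_ne_of_ne (by simp [Fin.ext_iff])
          (by simp [Fin.ext_iff]; omega)]
        rw [Vmid _ _ (by simp) (by simpa using hjle), if_neg (by simp; omega)]
    have hc := hcoord ⟨(j:ℕ)+1, hk⟩
    rw [hrhs] at hc
    simp only [hVk, mul_ite, mul_one, mul_zero, Finset.sum_ite_eq',
      Finset.mem_univ, if_true, hb] at hc
    linarith
  -- the equation at vertex n
  have hc := hcoord ⟨n, hnlt⟩
  rw [Equiv.swap_apply_of_ne_of_ne (by simp [Fin.ext_iff]; omega)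
    (by simp [Fin.ext_iff]; omega)] at hc
  rw [show simplexVert n p ⟨n, hnlt⟩ ⟨0, h0n⟩ = (p:ℤ) - 1 from by
    rw [Vn]; exact if_neg (by simp; omega)] at hc
  have hterm : ∀ j : Fin n, A ⟨0, h0n⟩ j * simplexVert n p ⟨n, hnlt⟩ j
      = if j = (⟨n-1, hl⟩ : Fin n) then A ⟨0, h0n⟩ ⟨n-1, hl⟩ * (p:ℤ)
        else -((p:ℤ)-1) := by
    intro j
    rw [Vn]
    by_cases hj : j = (⟨n-1, hl⟩ : Fin n)
    · subst hj; rw [if_pos (by simp), if_pos rfl]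
    · rw [if_neg (by simpa [Fin.ext_iff] using hj), if_neg hj,
        ha j (by simpa [Fin.ext_iff] using hj)]
      ring
  have hsumN : (∑ j, A ⟨0, h0n⟩ j * simplexVert n p ⟨n, hnlt⟩ j)
      = A ⟨0, h0n⟩ ⟨n-1, hl⟩ * (p:ℤ) + ((n:ℤ)-1) * (-((p:ℤ)-1)) := by
    rw [Finset.sum_congr rfl (fun j _ => hterm j)]
    rw [← Finset.add_sum_erase Finset.univ _ (Finset.mem_univ (⟨n-1, hl⟩ : Fin n))]
    rw [if_pos rfl]
    congr 1
    rw [Finset.sum_congr rfl (fun j hj => if_neg (Finset.ne_of_mem_erase hj))]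
    rw [Finset.sum_const, Finset.card_erase_of_mem (Finset.mem_univ _),
      Finset.card_univ, Fintype.card_fin, nsmul_eq_mul]
    congr 1
    push_cast [Nat.cast_sub (by omega : 1 ≤ n)]
    ring
  rw [hsumN, hb] at hc
  have key : ((n:ℤ) + 1) = (p:ℤ) * ((n:ℤ) - A ⟨0, h0n⟩ ⟨n-1, hl⟩) := by
    linear_combination hc
  have : (p:ℤ) ∣ ((n:ℤ) + 1) := ⟨_, key⟩
  exact_mod_cast this
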